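/- The class of hybrid zonotopes is closed under Minkowski sum: given hybrid zonotopes Z₁ = ⟨G₁^c, G₁^b, c₁, A₁^c, A₁^b, b₁⟩ and Z₂ = ⟨G₂^c, G₂^b, c₂, A₂^c, A₂^b, b₂⟩ in ℝ^n, their Minkowski sum Z₁ ⊕ Z₂ equals the hybrid zonotope with continuous generators [G₁^c G₂^c], binary generators [G₁^b G₂^b], center c₁ + c₂, and block-diagonal constraints diag(A₁^c, A₂^c), diag(A₁^b, A₂^b), (b₁, b₂). -/

import Mathlib

/-- The hybrid zonotope with generator matrices `Gc`, `Gb`, center `c`,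
and constraint data `Ac`, `Ab`, `b` (Definition 2 of the paper). -/
def HybZono {n g bi nc : Type*} [Fintype g] [Fintype bi] [Fintype nc]
    (Gc : Matrix n g ℝ) (Gb : Matrix n bi ℝ) (c : n → ℝ)
    (Ac : Matrix nc g ℝ) (Ab : Matrix nc bi ℝ) (b : nc → ℝ) : Set (n → ℝ) :=
  {z | ∃ ξc : g → ℝ, ∃ ξb : bi → ℝ,
    (∀ i, |ξc i| ≤ 1) ∧ (∀ i, ξb i = 1 ∨ ξb i = -1) ∧
    Ac.mulVec ξc + Ab.mulVec ξb = b ∧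
    z = Gc.mulVec ξc + Gb.mulVec ξb + c}

/-- hybrid zonotopes are closed under Minkowski sum. -/
theorem hybZono_minkowski_sum {n ng1 nb1 nc1 ng2 nb2 nc2 : ℕ}
    (Gc1 : Matrix (Fin n) (Fin ng1) ℝ) (Gb1 : Matrix (Fin n) (Fin nb1) ℝ) (c1 : Fin n → ℝ)
    (Ac1 : Matrix (Fin nc1) (Fin ng1) ℝ) (Ab1 : Matrix (Fin nc1) (Fin nb1) ℝ) (b1 : Fin nc1 → ℝ)
    (Gc2 : Matrix (Fin n) (Fin ng2) ℝ) (Gb2 : Matrix (Fin n) (Fin nb2) ℝ) (c2 : Fin n → ℝ)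
    (Ac2 : Matrix (Fin nc2) (Fin ng2) ℝ) (Ab2 : Matrix (Fin nc2) (Fin nb2) ℝ) (b2 : Fin nc2 → ℝ) :
    {z | ∃ z1 ∈ HybZono Gc1 Gb1 c1 Ac1 Ab1 b1, ∃ z2 ∈ HybZono Gc2 Gb2 c2 Ac2 Ab2 b2,
        z = z1 + z2} =
      HybZono (Matrix.fromCols Gc1 Gc2) (Matrix.fromCols Gb1 Gb2) (c1 + c2)
        (Matrix.fromBlocks Ac1 0 0 Ac2) (Matrix.fromBlocks Ab1 0 0 Ab2)
        (Sum.elim b1 b2) := by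
  ext z
  simp only [Set.mem_setOf_eq, HybZono]
  constructor
  · rintro ⟨z1, ⟨ξc1, ξb1, h1, h2, h3, rfl⟩, z2, ⟨ξc2, ξb2, h4, h5, h6, rfl⟩, rfl⟩
    refine ⟨Sum.elim ξc1 ξc2, Sum.elim ξb1 ξb2, ?_, ?_, ?_, ?_⟩
    · rintro (i|i)
      · simpa using h1 i
      · simpa using h4 i
    · rintro (i|i)
      · simpa using h2 i
      · simpa using h5 i
    · rw [Matrix.fromBlocks_mulVec, Matrix.fromBlocks_mulVec]
      funext i
      cases i with
      | inl i => simpa [Matrix.zero_mulVec] using congrFun h3 i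
      | inr i => simpa [Matrix.zero_mulVec] using congrFun h6 i
    · rw [Matrix.fromCols_mulVec_sumElim, Matrix.fromCols_mulVec_sumElim]
      abel
  · rintro ⟨ξc, ξb, h1, h2, h3, rfl⟩
    have hξc : ξc = Sum.elim (ξc ∘ Sum.inl) (ξc ∘ Sum.inr) := by
      funext i; cases i <;> rfl
    have hξb : ξb = Sum.elim (ξb ∘ Sum.inl) (ξb ∘ Sum.inr) := by
      funext i; cases i <;> rfl
    rw [hξc, hξb, Matrix.fromBlocks_mulVec, Matrix.fromBlocks_mulVec] at h3
    rw [hξc, hξb, Matrix.fromCols_mulVec_sumElim, Matrix.fromCols_mulVec_sumElim]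
    refine ⟨_, ⟨ξc ∘ Sum.inl, ξb ∘ Sum.inl, fun i => h1 (Sum.inl i), fun i => h2 (Sum.inl i), ?_, rfl⟩,
      _, ⟨ξc ∘ Sum.inr, ξb ∘ Sum.inr, fun i => h1 (Sum.inr i), fun i => h2 (Sum.inr i), ?_, rfl⟩, ?_⟩
    · funext i
      simpa [Matrix.zero_mulVec] using congrFun h3 (Sum.inl i)
    · funext i
      simpa [Matrix.zero_mulVec] using congrFun h3 (Sum.inr i)
    · abel
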